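/- Let n ≥ 1. For permutations β₁,…,β₉ of {1,…,2n}, the lattice functional F(β) := 4|γ_{n,n}⁻¹β₅| + |γ_{n,n}⁻¹β₄| + |γ_{n,n}⁻¹β₆| + 2(|β₁| + |β₃| + |β₄| + |β₆| + |β₇| + |β₉|) + 3(|β₂| + |β₈|) + Σ_{(i,j)∈E} |β_i⁻¹β_j|, where E = {(1,2),(2,3),(4,5),(5,6),(7,8),(8,9),(1,4),(4,7),(2,5),(5,8),(3,6),(6,9)}, attains the value 6(2n − 2) (its minimum) if and only if β₁ = β₂ = β₃ = β₄ = β₆ = β₇ = β₈ = β₉ = Id and Id ≤ β₅ ≤ γ_{n,n}. -/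

import Mathlib

/-!
For a permutation `σ` of a finite set of size `m`, `cycleCount σ` is the number of cycles
(fixed points count as cycles) and `permLen σ = m - cycleCount σ` (the minimal number of
transpositions needed to write `σ`).  We model `{1,…,2n}` as `Fin n ⊕ Fin n`, the first
summand being `{1,…,n}` and the second `{n+1,…,2n}`.  `gammaNN n` is the product of the
two `n`-cycles `(1,2,…,n)` and `(n+1,…,2n)`.
-/

/-- The number of cycles of a permutation, where fixed points count as cycles. -/
noncomputable def cycleCount {α : Type*} [Fintype α] [DecidableEq α]
    (σ : Equiv.Perm α) : ℕ :=
  Multiset.card σ.cycleType + (Fintype.card α - σ.support.card)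

/-- `|σ| = m - #(σ)`, the minimal number of transpositions whose product is `σ`. -/
noncomputable def permLen {α : Type*} [Fintype α] [DecidableEq α]
    (σ : Equiv.Perm α) : ℕ :=
  Fintype.card α - cycleCount σ

/-- `γ_{n,n}`: the product of the two `n`-cycles `(1,…,n)` and `(n+1,…,2n)`. -/
def gammaNN (n : ℕ) : Equiv.Perm (Fin n ⊕ Fin n) :=
  Equiv.sumCongr (finRotate n) (finRotate n)

/-- A permutation of `{1,…,2n}` is connected if some cycle of it contains both an
element of `{1,…,n}` and an element of `{n+1,…,2n}`. -/
def IsConnectedPerm {n : ℕ} (β : Equiv.Perm (Fin n ⊕ Fin n)) : Prop :=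
  ∃ a b : Fin n, β.SameCycle (Sum.inl a) (Sum.inr b)

/-- The geodesic partial order on permutations: `σ ≤ τ` iff `|σ| + |σ⁻¹τ| = |τ|`. -/
def permLe {α : Type*} [Fintype α] [DecidableEq α] (σ τ : Equiv.Perm α) : Prop :=
  permLen σ + permLen (σ⁻¹ * τ) = permLen τ

/-- The lattice functional for the 3×3 grid:
`F(β) = 4|γ_{n,n}⁻¹β₅| + |γ_{n,n}⁻¹β₄| + |γ_{n,n}⁻¹β₆|
  + 2(|β₁| + |β₃| + |β₄| + |β₆| + |β₇| + |β₉|) + 3(|β₂| + |β₈|)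
  + Σ_{(i,j)∈E} |βᵢ⁻¹βⱼ|` over the twelve grid edges `E`. -/
noncomputable def latticeF {n : ℕ}
    (b₁ b₂ b₃ b₄ b₅ b₆ b₇ b₈ b₉ : Equiv.Perm (Fin n ⊕ Fin n)) : ℕ :=
  4 * permLen ((gammaNN n)⁻¹ * b₅) + permLen ((gammaNN n)⁻¹ * b₄)
    + permLen ((gammaNN n)⁻¹ * b₆)
    + 2 * (permLen b₁ + permLen b₃ + permLen b₄ + permLen b₆ + permLen b₇ + permLen b₉)
    + 3 * (permLen b₂ + permLen b₈)
    + (permLen (b₁⁻¹ * b₂) + permLen (b₂⁻¹ * b₃) + permLen (b₄⁻¹ * b₅)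
      + permLen (b₅⁻¹ * b₆) + permLen (b₇⁻¹ * b₈) + permLen (b₈⁻¹ * b₉)
      + permLen (b₁⁻¹ * b₄) + permLen (b₄⁻¹ * b₇) + permLen (b₂⁻¹ * b₅)
      + permLen (b₅⁻¹ * b₈) + permLen (b₃⁻¹ * b₆) + permLen (b₆⁻¹ * b₉))

section AuxPermLen

set_option linter.unusedSectionVars false

open Equiv Equiv.Perm

variable {α : Type*} [Fintype α] [DecidableEq α]

theorem two_mul_card_cycleType_le (σ : Perm α) :
    2 * Multiset.card σ.cycleType ≤ σ.support.card := by
  rw [← σ.sum_cycleType]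
  have := Multiset.card_nsmul_le_sum (s := σ.cycleType) (a := 2)
    (fun x hx => two_le_of_mem_cycleType hx)
  simpa [Multiset.card_nsmul_le_sum, smul_eq_mul, mul_comm] using this

theorem permLen_eq (σ : Perm α) :
    permLen σ = σ.support.card - Multiset.card σ.cycleType := by
  have h1 := σ.support.card_le_univ
  have h2 := two_mul_card_cycleType_le σ
  unfold permLen cycleCount
  omega

theorem permLen_one : permLen (1 : Perm α) = 0 := by
  simp [permLen_eq]

theorem permLen_eq_zero_iff {σ : Perm α} : permLen σ = 0 ↔ σ = 1 := by
  constructor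
  · intro h
    have h2 := two_mul_card_cycleType_le σ
    rw [permLen_eq] at h
    have hk : Multiset.card σ.cycleType ≥ σ.support.card := by omega
    have : σ.support.card = 0 := by omega
    rwa [Finset.card_eq_zero, support_eq_empty_iff] at this
  · rintro rfl; exact permLen_one

theorem permLen_inv (σ : Perm α) : permLen σ⁻¹ = permLen σ := by
  rw [permLen_eq, permLen_eq, cycleType_inv, support_inv]

theorem permLen_swap {a b : α} (h : a ≠ b) : permLen (swap a b) = 1 := by
  rw [permLen_eq, (isCycle_swap h).cycleType, card_support_swap h]
  simp

theorem permLen_le_card_support_sub_one {σ : Perm α} (h : σ ≠ 1) :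
    permLen σ ≤ σ.support.card - 1 := by
  rw [permLen_eq]
  have : Multiset.card σ.cycleType ≠ 0 := by simp [card_cycleType_eq_zero, h]
  omega

theorem Equiv.Perm.Disjoint.permLen_mul {σ τ : Perm α} (h : Disjoint σ τ) :
    permLen (σ * τ) = permLen σ + permLen τ := by
  rw [permLen_eq, permLen_eq, permLen_eq, h.cycleType_mul, h.card_support_mul]
  have h1 := two_mul_card_cycleType_le σ
  have h2 := two_mul_card_cycleType_le τ
  simp only [Multiset.card_add]
  omega

theorem permLen_cycle {c : Perm α} (h : IsCycle c) :
    permLen c = c.support.card - 1 := by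
  rw [permLen_eq, h.cycleType]; simp

theorem permLen_swap_mul_cycle {c : Perm α} (hc : IsCycle c) {x : α} (hx : c x ≠ x) :
    permLen c = permLen (swap x (c x) * c) + 1 := by
  by_cases h2 : c (c x) = x
  · have hcs : c = swap x (c x) := hc.eq_swap_of_apply_apply_eq_self hx h2
    have h1 : swap x (c x) * c = 1 := by
      nth_rewrite 2 [hcs]
      exact swap_mul_self _ _
    rw [h1, permLen_one, hcs, permLen_swap hx.symm]
  · have hcyc' : IsCycle (swap x (c x) * c) := hc.swap_mul hx h2
    have hsupp : (swap x (c x) * c).support = c.support \ {x} :=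
      support_swap_mul_eq c x h2
    have hxmem : x ∈ c.support := mem_support.mpr hx
    have hcard : (swap x (c x) * c).support.card = c.support.card - 1 := by
      rw [hsupp, Finset.card_sdiff_of_subset (by simpa using hxmem)]
      simp
    have h2le := hc.two_le_card_support
    rw [permLen_cycle hc, permLen_cycle hcyc', hcard]
    omega

theorem permLen_swap_mul {σ : Perm α} {x : α} (hx : σ x ≠ x) :
    permLen σ = permLen (swap x (σ x) * σ) + 1 := by
  classical
  set c := σ.cycleOf x with hc
  set ρ := c⁻¹ * σ with hρ
  have hcycle : IsCycle c := isCycle_cycleOf σ hx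
  have hcx : c x = σ x := cycleOf_apply_self σ x
  have hdisj : Disjoint c ρ := by
    intro y
    by_cases hy : σ.SameCycle x y
    · right
      have hcy : c y = σ y := by rw [hc, cycleOf_apply, if_pos hy]
      rw [hρ, mul_apply, ← hcy, Perm.inv_def, Equiv.symm_apply_apply]
    · left; exact cycleOf_apply_of_not_sameCycle hy
  have hprod : c * ρ = σ := by rw [hρ, mul_inv_cancel_left]
  have hcxx : c x ≠ x := by rw [hcx]; exact hx
  have hsub : ∀ y, (swap x (c x) * c) y ≠ y → c y ≠ y := by
    intro y h
    exact mem_support.mp (mem_support_swap_mul_imp_mem_support_ne (mem_support.mpr h)).1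
  have hdisj2 : Disjoint (swap x (c x) * c) ρ := by
    intro y
    rcases hdisj y with h | h
    · left; by_contra hne; exact (hsub y hne) h
    · right; exact h
  have e1 : permLen σ = permLen c + permLen ρ := by
    rw [← hprod]; exact hdisj.permLen_mul
  have e2 : permLen (swap x (σ x) * σ) = permLen (swap x (c x) * c) + permLen ρ := by
    rw [← hcx, ← hprod, ← mul_assoc]
    exact hdisj2.permLen_mul
  rw [e1, e2, permLen_swap_mul_cycle hcycle hcxx]
  omega

theorem card_quad_le (a b c d : α) : ({a, b, c, d} : Finset α).card ≤ 4 := by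
  apply (Finset.card_insert_le _ _).trans
  apply Nat.succ_le_succ
  apply (Finset.card_insert_le _ _).trans
  apply Nat.succ_le_succ
  apply (Finset.card_insert_le _ _).trans
  simp

theorem permLen_swap_mul_le_aux (N : ℕ) :
    ∀ (σ : Perm α) (a b : α), a ≠ b → permLen σ ≤ N →
      permLen (swap a b * σ) ≤ permLen σ + 1 := by
  induction N with
  | zero =>
    intro σ a b hab hN
    have : σ = 1 := permLen_eq_zero_iff.mp (Nat.le_zero.mp hN)
    subst this
    simp [permLen_swap hab, permLen_one]
  | succ N ih =>
    intro σ a b hab hN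
    by_cases h1 : σ = 1
    · subst h1; simp [permLen_swap hab, permLen_one]
    by_cases hex : ∃ x, σ x ≠ x ∧ x ≠ a ∧ x ≠ b ∧ σ x ≠ a ∧ σ x ≠ b
    · obtain ⟨x, hx, hxa, hxb, hsa, hsb⟩ := hex
      set σ₁ := swap x (σ x) * σ with hσ₁
      have hlen : permLen σ = permLen σ₁ + 1 := permLen_swap_mul hx
      have hdisj : Disjoint (swap x (σ x)) (swap a b) := by
        rw [disjoint_iff_disjoint_support, support_swap (Ne.symm hx), support_swap hab]
        rw [Finset.disjoint_left]
        intro y hy hz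
        simp only [Finset.mem_insert, Finset.mem_singleton] at hy hz
        rcases hy with rfl | rfl <;> rcases hz with rfl | rfl <;> simp_all
      have hcomm : swap x (σ x) * swap a b = swap a b * swap x (σ x) :=
        hdisj.commute.eq
      have hτx : (swap a b * σ) x = σ x := by
        simp [Perm.mul_apply, swap_apply_of_ne_of_ne hsa hsb]
      have hτxx : (swap a b * σ) x ≠ x := by rw [hτx]; exact hx
      have key : permLen (swap a b * σ) = permLen (swap x (σ x) * (swap a b * σ)) + 1 := by
        have h := permLen_swap_mul hτxx
        rwa [hτx] at h
      have e : swap x (σ x) * (swap a b * σ) = swap a b * σ₁ := by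
        rw [hσ₁, ← mul_assoc, hcomm, mul_assoc]
      rw [key, e]
      have hle : permLen σ₁ ≤ N := by omega
      have := ih σ₁ a b hab hle
      omega
    · push_neg at hex
      have hsupp : σ.support ⊆ {a, b, σ⁻¹ a, σ⁻¹ b} := by
        intro y hy
        have hy' := mem_support.mp hy
        simp only [Finset.mem_insert, Finset.mem_singleton]
        by_cases h1 : y = a; · tauto
        by_cases h2 : y = b; · tauto
        by_cases h3 : σ y = a
        · right; right; left; rw [← h3, Perm.inv_def, Equiv.symm_apply_apply]
        · right; right; right
          have := hex y hy' h1 h2 h3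
          rw [← this, Perm.inv_def, Equiv.symm_apply_apply]
      have hcard4 : σ.support.card ≤ 4 :=
        (Finset.card_le_card hsupp).trans (card_quad_le _ _ _ _)
      by_cases hs2 : σ.support.card = 2
      · obtain ⟨c, d, hcd, rfl⟩ := card_support_eq_two.mp hs2
        rw [permLen_swap hcd]
        by_cases hτ1 : swap a b * swap c d = 1
        · rw [hτ1, permLen_one]; omega
        by_cases hshare : a = c ∨ a = d ∨ b = c ∨ b = d
        · have hsub : (swap a b * swap c d).support ⊆ ({a, b, c, d} : Finset α) := by
            intro y hy
            have h' := support_mul_le (swap a b) (swap c d) hy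
            simp only [Finset.sup_eq_union, Finset.mem_union, support_swap hab,
              support_swap hcd, Finset.mem_insert, Finset.mem_singleton] at h'
            simp only [Finset.mem_insert, Finset.mem_singleton]
            tauto
          have hc3 : ({a, b, c, d} : Finset α).card ≤ 3 := by
            rcases hshare with rfl | rfl | rfl | rfl
            · rw [show ({a, b, a, d} : Finset α) = {a, b, d} by
                ext y; simp; tauto]
              apply (Finset.card_insert_le _ _).trans
              apply Nat.succ_le_succ
              apply (Finset.card_insert_le _ _).trans
              simp
            · rw [show ({a, b, c, a} : Finset α) = {a, b, c} by
                ext y; simp; tauto]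
              apply (Finset.card_insert_le _ _).trans
              apply Nat.succ_le_succ
              apply (Finset.card_insert_le _ _).trans
              simp
            · rw [show ({a, b, b, d} : Finset α) = {a, b, d} by
                rw [Finset.insert_idem]]
              apply (Finset.card_insert_le _ _).trans
              apply Nat.succ_le_succ
              apply (Finset.card_insert_le _ _).trans
              simp
            · rw [show ({a, b, c, b} : Finset α) = {a, b, c} by
                ext y; simp; tauto]
              apply (Finset.card_insert_le _ _).trans
              apply Nat.succ_le_succ
              apply (Finset.card_insert_le _ _).trans
              simp
          have := permLen_le_card_support_sub_one hτ1
          have := (Finset.card_le_card hsub).trans hc3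
          omega
        · push_neg at hshare
          obtain ⟨h1, h2, h3, h4⟩ := hshare
          have hdisj : Disjoint (swap a b) (swap c d) := by
            rw [disjoint_iff_disjoint_support, support_swap hab, support_swap hcd]
            rw [Finset.disjoint_left]
            intro y hy hz
            simp only [Finset.mem_insert, Finset.mem_singleton] at hy hz
            rcases hy with rfl | rfl <;> rcases hz with rfl | rfl <;> simp_all
          rw [hdisj.permLen_mul, permLen_swap hab, permLen_swap hcd]
      · have h0 : σ.support.card ≠ 0 := by
          simp only [ne_eq, Finset.card_eq_zero, support_eq_empty_iff]
          exact h1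
        have h1' := card_support_ne_one σ
        have hs3 : 3 ≤ σ.support.card := by omega
        have hplen : 2 ≤ permLen σ := by
          rw [permLen_eq]
          have := two_mul_card_cycleType_le σ
          omega
        by_cases hτ1 : swap a b * σ = 1
        · rw [hτ1, permLen_one]; omega
        have hτsub : (swap a b * σ).support ⊆ ({a, b, σ⁻¹ a, σ⁻¹ b} : Finset α) := by
          intro y hy
          have h' := support_mul_le (swap a b) σ hy
          simp only [Finset.sup_eq_union, Finset.mem_union, support_swap hab,
            Finset.mem_insert, Finset.mem_singleton] at h'
          rcases h' with (rfl | rfl) | h'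
          · simp
          · simp
          · exact hsupp h'
        have hτ4 : (swap a b * σ).support.card ≤ 4 :=
          (Finset.card_le_card hτsub).trans (card_quad_le _ _ _ _)
        have := permLen_le_card_support_sub_one hτ1
        omega

theorem permLen_swap_mul_le {a b : α} (hab : a ≠ b) (σ : Perm α) :
    permLen (swap a b * σ) ≤ permLen σ + 1 :=
  permLen_swap_mul_le_aux (permLen σ) σ a b hab le_rfl

theorem permLen_mul_le_aux (N : ℕ) :
    ∀ σ τ : Perm α, permLen σ ≤ N → permLen (σ * τ) ≤ permLen σ + permLen τ := by
  induction N with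
  | zero =>
    intro σ τ hN
    have : σ = 1 := permLen_eq_zero_iff.mp (Nat.le_zero.mp hN)
    subst this
    simp
  | succ N ih =>
    intro σ τ hN
    by_cases h1 : σ = 1
    · subst h1; simp
    obtain ⟨x, hx⟩ : ∃ x, σ x ≠ x := by
      by_contra h
      push_neg at h
      exact h1 (Equiv.ext h)
    set σ₁ := swap x (σ x) * σ with hσ₁
    have hlen : permLen σ = permLen σ₁ + 1 := permLen_swap_mul hx
    have e : σ * τ = swap x (σ x) * (σ₁ * τ) := by
      rw [hσ₁, mul_assoc, ← mul_assoc (swap x (σ x)), swap_mul_self, one_mul]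
    rw [e]
    have h2 := permLen_swap_mul_le (Ne.symm hx) (σ₁ * τ)
    have h3 := ih σ₁ τ (by omega)
    omega

theorem permLen_mul_le (σ τ : Perm α) : permLen (σ * τ) ≤ permLen σ + permLen τ :=
  permLen_mul_le_aux (permLen σ) σ τ le_rfl

section SumCongr

variable {β γ : Type*} [Fintype β] [DecidableEq β] [Fintype γ] [DecidableEq γ]

theorem sumCongr_pow' (f : Perm β) (g : Perm γ) (k : ℕ) :
    (Equiv.sumCongr f g) ^ k = Equiv.sumCongr (f ^ k) (g ^ k) := by
  induction k with
  | zero => simp [Equiv.Perm.sumCongr_one]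
  | succ k ih => rw [pow_succ, pow_succ, pow_succ, ih, Equiv.Perm.sumCongr_mul]

theorem sumCongr_zpow' (f : Perm β) (g : Perm γ) (k : ℤ) :
    (Equiv.sumCongr f g) ^ k = Equiv.sumCongr (f ^ k) (g ^ k) := by
  cases k with
  | ofNat m => simpa using sumCongr_pow' f g m
  | negSucc m =>
    rw [zpow_negSucc, zpow_negSucc, zpow_negSucc, sumCongr_pow', Equiv.Perm.sumCongr_inv]

theorem isCycle_sumCongr_left {c : Perm β} (hc : IsCycle c) :
    IsCycle (Equiv.sumCongr c (1 : Perm γ)) := by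
  obtain ⟨y0, hy0, hall⟩ := hc
  refine ⟨Sum.inl y0, ?_, ?_⟩
  · simpa using hy0
  · rintro (y | v) hz
    · have hy : c y ≠ y := by simpa using hz
      obtain ⟨k, hk⟩ := hall hy
      exact ⟨k, by rw [sumCongr_zpow']; simp [hk]⟩
    · simp at hz

theorem isCycle_sumCongr_right {c : Perm γ} (hc : IsCycle c) :
    IsCycle (Equiv.sumCongr (1 : Perm β) c) := by
  obtain ⟨y0, hy0, hall⟩ := hc
  refine ⟨Sum.inr y0, ?_, ?_⟩
  · simpa using hy0
  · rintro (v | y) hz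
    · simp at hz
    · have hy : c y ≠ y := by simpa using hz
      obtain ⟨k, hk⟩ := hall hy
      exact ⟨k, by rw [sumCongr_zpow']; simp [hk]⟩

theorem support_sumCongr_left (c : Perm β) :
    support (Equiv.sumCongr c (1 : Perm γ)) = c.support.map ⟨Sum.inl, Sum.inl_injective⟩ := by
  ext z
  cases z <;> simp [mem_support]

theorem support_sumCongr_right (c : Perm γ) :
    support (Equiv.sumCongr (1 : Perm β) c) = c.support.map ⟨Sum.inr, Sum.inr_injective⟩ := by
  ext z
  cases z <;> simp [mem_support]

end SumCongr

theorem permLen_gammaNN {n : ℕ} (hn : 1 ≤ n) : permLen (gammaNN n) = 2 * n - 2 := by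
  rcases Nat.lt_or_ge n 2 with h2 | h2
  · have hn1 : n = 1 := by omega
    subst hn1
    have : gammaNN 1 = 1 := by
      rw [gammaNN, finRotate_one]
      exact Equiv.Perm.sumCongr_one
    rw [this, permLen_one]
  · have hcyc : IsCycle (finRotate n) := isCycle_finRotate_of_le h2
    have hsupp : (finRotate n).support = Finset.univ := support_finRotate_of_le h2
    have hprod : gammaNN n =
        Equiv.sumCongr (finRotate n) (1 : Perm (Fin n)) *
          Equiv.sumCongr (1 : Perm (Fin n)) (finRotate n) := by
      unfold gammaNN
      rw [Equiv.Perm.sumCongr_mul, mul_one, one_mul]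
    have hdisj : Disjoint (Equiv.sumCongr (finRotate n) (1 : Perm (Fin n)))
        (Equiv.sumCongr (1 : Perm (Fin n)) (finRotate n)) := by
      rintro (y | y)
      · right; simp
      · left; simp
    have hL : permLen (Equiv.sumCongr (finRotate n) (1 : Perm (Fin n))) = n - 1 := by
      rw [permLen_cycle (isCycle_sumCongr_left hcyc), support_sumCongr_left,
        Finset.card_map, hsupp]
      simp
    have hR : permLen (Equiv.sumCongr (1 : Perm (Fin n)) (finRotate n)) = n - 1 := by
      rw [permLen_cycle (isCycle_sumCongr_right hcyc), support_sumCongr_right,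
        Finset.card_map, hsupp]
      simp
    rw [hprod, hdisj.permLen_mul, hL, hR]
    omega

theorem dist_symm (σ τ : Perm α) : permLen (σ⁻¹ * τ) = permLen (τ⁻¹ * σ) := by
  rw [← permLen_inv, mul_inv_rev, inv_inv]

theorem path3 (x y w : Perm α) :
    permLen w ≤ permLen x + permLen (x⁻¹ * y) + permLen (y⁻¹ * w) := by
  have h : x * (x⁻¹ * y) * (y⁻¹ * w) = w := by group
  calc permLen w = permLen (x * (x⁻¹ * y) * (y⁻¹ * w)) := by rw [h]
    _ ≤ permLen (x * (x⁻¹ * y)) + permLen (y⁻¹ * w) := permLen_mul_le _ _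
    _ ≤ permLen x + permLen (x⁻¹ * y) + permLen (y⁻¹ * w) :=
        Nat.add_le_add_right (permLen_mul_le _ _) _

theorem path4 (x y z w : Perm α) :
    permLen w ≤ permLen x + permLen (x⁻¹ * y) + permLen (y⁻¹ * z) + permLen (z⁻¹ * w) := by
  have h : x * (x⁻¹ * y) * (y⁻¹ * z) * (z⁻¹ * w) = w := by group
  calc permLen w = permLen (x * (x⁻¹ * y) * (y⁻¹ * z) * (z⁻¹ * w)) := by rw [h]
    _ ≤ permLen (x * (x⁻¹ * y) * (y⁻¹ * z)) + permLen (z⁻¹ * w) := permLen_mul_le _ _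
    _ ≤ permLen (x * (x⁻¹ * y)) + permLen (y⁻¹ * z) + permLen (z⁻¹ * w) :=
        Nat.add_le_add_right (permLen_mul_le _ _) _
    _ ≤ permLen x + permLen (x⁻¹ * y) + permLen (y⁻¹ * z) + permLen (z⁻¹ * w) :=
        Nat.add_le_add_right (Nat.add_le_add_right (permLen_mul_le _ _) _) _

end AuxPermLen

/-- The lattice functional attains its minimum `6(2n-2)` exactly when
`β₁ = β₂ = β₃ = β₄ = β₆ = β₇ = β₈ = β₉ = Id` and `Id ≤ β₅ ≤ γ_{n,n}`. -/
theorem latticeF_eq_min_iff (n : ℕ) (hn : 1 ≤ n)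
    (b₁ b₂ b₃ b₄ b₅ b₆ b₇ b₈ b₉ : Equiv.Perm (Fin n ⊕ Fin n)) :
    latticeF b₁ b₂ b₃ b₄ b₅ b₆ b₇ b₈ b₉ = 6 * (2 * n - 2) ↔
      (b₁ = 1 ∧ b₂ = 1 ∧ b₃ = 1 ∧ b₄ = 1 ∧ b₆ = 1 ∧ b₇ = 1 ∧ b₈ = 1 ∧ b₉ = 1) ∧
        permLe 1 b₅ ∧ permLe b₅ (gammaNN n) := by
  have hγ : permLen (gammaNN n) = 2 * n - 2 := permLen_gammaNN hn
  constructor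
  · intro h
    simp only [latticeF] at h
    have tA := path4 b₁ b₂ b₅ (gammaNN n)
    rw [dist_symm b₅ (gammaNN n)] at tA
    have tB := path4 b₇ b₈ b₅ (gammaNN n)
    rw [dist_symm b₈ b₅, dist_symm b₅ (gammaNN n)] at tB
    have tC := path3 b₄ b₅ (gammaNN n)
    rw [dist_symm b₅ (gammaNN n)] at tC
    have tD := path3 b₆ b₅ (gammaNN n)
    rw [dist_symm b₆ b₅, dist_symm b₅ (gammaNN n)] at tD
    have tE := path3 b₁ b₄ (gammaNN n)
    rw [dist_symm b₄ (gammaNN n)] at tE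
    have tF := path3 b₉ b₆ (gammaNN n)
    rw [dist_symm b₉ b₆, dist_symm b₆ (gammaNN n)] at tF
    rw [hγ] at tA tB tC tD tE tF
    have hz : permLen b₂ = 0 ∧ permLen b₃ = 0 ∧ permLen b₄ = 0 ∧ permLen b₆ = 0 ∧
        permLen b₇ = 0 ∧ permLen b₈ = 0 ∧ permLen b₉ = 0 := by omega
    obtain ⟨h2, h3, h4, h6, h7, h8, h9⟩ := hz
    obtain rfl : b₂ = 1 := permLen_eq_zero_iff.mp h2
    obtain rfl : b₃ = 1 := permLen_eq_zero_iff.mp h3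
    obtain rfl : b₄ = 1 := permLen_eq_zero_iff.mp h4
    obtain rfl : b₆ = 1 := permLen_eq_zero_iff.mp h6
    obtain rfl : b₇ = 1 := permLen_eq_zero_iff.mp h7
    obtain rfl : b₈ = 1 := permLen_eq_zero_iff.mp h8
    obtain rfl : b₉ = 1 := permLen_eq_zero_iff.mp h9
    have tA' := path4 b₁ 1 b₅ (gammaNN n)
    rw [dist_symm b₅ (gammaNN n)] at tA'
    simp only [mul_one, inv_one, one_mul, permLen_one, permLen_inv] at tA'
    have tC' := path3 1 b₅ (gammaNN n)
    rw [dist_symm b₅ (gammaNN n)] at tC'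
    simp only [mul_one, inv_one, one_mul, permLen_one, permLen_inv] at tC'
    rw [hγ] at tA' tC'
    simp only [mul_one, inv_one, one_mul, permLen_one, permLen_inv] at h
    rw [hγ] at h
    have hb1 : permLen b₁ = 0 := by omega
    have htight : permLen b₅ + permLen ((gammaNN n)⁻¹ * b₅) = 2 * n - 2 := by omega
    refine ⟨⟨permLen_eq_zero_iff.mp hb1, rfl, rfl, rfl, rfl, rfl, rfl, rfl⟩, ?_, ?_⟩
    · show permLen 1 + permLen (1⁻¹ * b₅) = permLen b₅
      simp [permLen_one]
    · show permLen b₅ + permLen (b₅⁻¹ * gammaNN n) = permLen (gammaNN n)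
      rw [dist_symm b₅ (gammaNN n), hγ]
      omega
  · rintro ⟨⟨rfl, rfl, rfl, rfl, rfl, rfl, rfl, rfl⟩, _h1, h5⟩
    have h5' : permLen b₅ + permLen (b₅⁻¹ * gammaNN n) = permLen (gammaNN n) := h5
    rw [dist_symm b₅ (gammaNN n), hγ] at h5'
    simp only [latticeF, mul_one, inv_one, one_mul, permLen_one, permLen_inv]
    rw [hγ]
    omega
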